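/- (Abelian property) For every mass distribution μ₀ on ℤ^d with finite support and every capacity κ > 0, any two infinitive toppling sequences T₁ and T₂ for the boundary sandpile BS(μ₀, κ) have the same odometer: u₁(x) = u₂(x) for all x ∈ ℤ^d, where u_i is the pointwise limit of the odometer functions along T_i. -/

import Mathlib

open Filter

namespace Sandpile

/-- Lattice sites of `ℤ^d`. -/
abbrev Site (d : ℕ) := Fin d → ℤ

/-- Two sites are neighbours iff their `ℓ¹`-distance equals `1`. -/
def nbr {d : ℕ} (x y : Site d) : Prop := (∑ i, |x i - y i|) = 1

/-- The (combinatorial) boundary of a set `V ⊆ ℤ^d`. -/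
def bdry {d : ℕ} (V : Set (Site d)) : Set (Site d) :=
  {x | x ∈ V ∧ ∃ y, nbr x y ∧ y ∉ V}

/-- The (combinatorial) interior of a set `V ⊆ ℤ^d`. -/
def intr {d : ℕ} (V : Set (Site d)) : Set (Site d) := V \ bdry V

/-- The discrete Laplacian `Δu(x) = (1/(2d)) ∑_{y ∼ x} (u y - u x)`; the `2d`
neighbours of `x` are exactly the points `x ± eᵢ`. -/
noncomputable def lap {d : ℕ} (u : Site d → ℝ) (x : Site d) : ℝ :=
  (1 / (2 * (d : ℝ))) *
    ∑ i : Fin d, ((u (x + Pi.single i 1) - u x) + (u (x - Pi.single i 1) - u x))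

/-- A mass distribution: nonnegative with finite support. -/
def IsMassDist {d : ℕ} (μ : Site d → ℝ) : Prop :=
  (∀ x, 0 ≤ μ x) ∧ (Function.support μ).Finite

/-- Euclidean norm of a lattice point. -/
noncomputable def enorm {d : ℕ} (x : Site d) : ℝ :=
  Real.sqrt (∑ i, ((x i : ℝ)) ^ 2)

/-- A configuration of the boundary sandpile: visited sites, current mass, odometer. -/
structure Config (d : ℕ) where
  V : Set (Site d)
  μ : Site d → ℝ
  u : Site d → ℝ

/-- A site is unstable if it is a boundary site of the visited set carrying mass above
the capacity `κ`, or an interior site carrying positive mass. -/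
def Unstable {d : ℕ} (κ : ℝ) (c : Config d) (x : Site d) : Prop :=
  (x ∈ bdry c.V ∧ κ < c.μ x) ∨ (x ∈ intr c.V ∧ 0 < c.μ x)

open Classical in
/-- Toppling the site `x`: if `x` is unstable, its mass is distributed equally among its
`2d` neighbours, the odometer at `x` increases by the toppled mass, and the neighbours
of `x` become visited; toppling a stable site changes nothing. -/
noncomputable def topple {d : ℕ} (κ : ℝ) (c : Config d) (x : Site d) : Config d :=
  if Unstable κ c x then
    { V := c.V ∪ {y | nbr x y}
      μ := fun y => if y = x then 0 else
        if nbr x y then c.μ y + c.μ x / (2 * (d : ℝ)) else c.μ y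
      u := fun y => if y = x then c.u y + c.μ y else c.u y }
  else c

/-- The evolution of the boundary sandpile `BS(μ₀, κ)` along a toppling sequence `T`:
start from `V₀ = supp μ₀`, `u₀ = 0`, and at step `k` topple the site `T k`. -/
noncomputable def evolve {d : ℕ} (κ : ℝ) (μ0 : Site d → ℝ) (T : ℕ → Site d) :
    ℕ → Config d
  | 0 => ⟨Function.support μ0, μ0, fun _ => 0⟩
  | k + 1 => topple κ (evolve κ μ0 T k) (T k)

/-- A toppling sequence is infinitive if every site occurs in it infinitely often. -/
def Infinitive {d : ℕ} (T : ℕ → Site d) : Prop :=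
  ∀ x : Site d, {k : ℕ | T k = x}.Infinite

section Geo

variable {d : ℕ}

/-- Standard basis vector. -/
def bse (i : Fin d) : Site d := Pi.single i 1

lemma bse_apply (i j : Fin d) : bse i j = if j = i then 1 else 0 := by
  simp [bse, Pi.single_apply]

lemma not_nbr_self (x : Site d) : ¬ nbr x x := by
  simp [nbr]

lemma nbr_symm {x y : Site d} (h : nbr x y) : nbr y x := by
  unfold nbr at h ⊢
  simpa [abs_sub_comm] using h

lemma nbr_iff (x y : Site d) : nbr x y ↔ ∃ i, y = x + bse i ∨ y = x - bse i := by
  constructor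
  · intro h
    unfold nbr at h
    have h1 : ∃ i, x i ≠ y i := by
      by_contra hc
      push_neg at hc
      simp [hc] at h
    obtain ⟨i, hi⟩ := h1
    have hone : |x i - y i| = 1 := by
      have h2 : |x i - y i| ≤ ∑ j, |x j - y j| :=
        Finset.single_le_sum (f := fun j => |x j - y j|)
          (fun j _ => abs_nonneg _) (Finset.mem_univ i)
      have h3 : 1 ≤ |x i - y i| := abs_pos.mpr (sub_ne_zero.mpr hi)
      omega
    have hrest : ∀ j, j ≠ i → x j = y j := by
      intro j hj
      have h2 : |x i - y i| + ∑ k ∈ Finset.univ.erase i, |x k - y k| = ∑ k, |x k - y k| :=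
        Finset.add_sum_erase _ (fun k => |x k - y k|) (Finset.mem_univ i)
      have h3 : ∑ k ∈ Finset.univ.erase i, |x k - y k| = 0 := by omega
      have h4 : |x j - y j| = 0 :=
        (Finset.sum_eq_zero_iff_of_nonneg (fun k _ => abs_nonneg _)).mp h3 j
          (Finset.mem_erase.mpr ⟨hj, Finset.mem_univ j⟩)
      have := abs_eq_zero.mp h4
      omega
    refine ⟨i, ?_⟩
    rcases (abs_eq (by norm_num : (0:ℤ) ≤ 1)).mp hone with h5 | h5
    · right
      funext j
      by_cases hj : j = i
      · subst hj; simp [bse_apply]; omega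
      · simp [bse_apply, hj, hrest j hj]
    · left
      funext j
      by_cases hj : j = i
      · subst hj; simp [bse_apply]; omega
      · simp [bse_apply, hj, hrest j hj]
  · rintro ⟨i, h | h⟩ <;> subst h
    · unfold nbr
      have hterm : ∀ j : Fin d, |x j - (x + bse i) j| = if j = i then 1 else 0 := by
        intro j; by_cases hj : j = i <;> simp [bse_apply, hj]
      rw [Finset.sum_congr rfl fun j _ => hterm j]
      simp
    · unfold nbr
      have hterm : ∀ j : Fin d, |x j - (x - bse i) j| = if j = i then 1 else 0 := by
        intro j; by_cases hj : j = i <;> simp [bse_apply, hj]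
      rw [Finset.sum_congr rfl fun j _ => hterm j]
      simp

lemma nbr_add (x : Site d) (i : Fin d) : nbr x (x + bse i) :=
  (nbr_iff x _).mpr ⟨i, Or.inl rfl⟩

lemma nbr_sub (x : Site d) (i : Fin d) : nbr x (x - bse i) :=
  (nbr_iff x _).mpr ⟨i, Or.inr rfl⟩

lemma bse_ne_zero (i : Fin d) : bse i ≠ 0 := by
  intro h
  have := congrFun h i
  simp [bse_apply] at this

lemma bse_inj {i j : Fin d} (h : bse i = bse j) : i = j := by
  by_contra hij
  have := congrFun h i
  simp [bse_apply, hij] at this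

lemma add_bse_ne_sub (y : Site d) (i j : Fin d) : y + bse j ≠ y - bse i := by
  intro h
  have := congrFun h j
  simp only [Pi.add_apply, Pi.sub_apply, bse_apply, if_pos rfl] at this
  split_ifs at this <;> omega

lemma add_bse_inj {y : Site d} {i j : Fin d} : y + bse j = y + bse i ↔ j = i := by
  constructor
  · intro h
    exact bse_inj (add_left_cancel h)
  · rintro rfl; rfl

lemma sub_bse_inj {y : Site d} {i j : Fin d} : y - bse j = y - bse i ↔ j = i := by
  constructor
  · intro h
    have : bse j = bse i := by
      have h2 := sub_right_injective h
      exact h2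
    exact bse_inj this
  · rintro rfl; rfl

open Classical in
/-- Key counting identity used for the discrete Laplacian bookkeeping. -/
lemma sum_ite_rep (z y : Site d) (m : ℝ) :
    (∑ i, ((if y + bse i = z then m else 0) + (if y - bse i = z then m else 0)))
      = if nbr z y then m else 0 := by
  classical
  rw [Finset.sum_add_distrib]
  by_cases h : nbr z y
  · rw [if_pos h]
    rw [nbr_iff] at h
    obtain ⟨i, hi | hi⟩ := h
    · -- y = z + bse i, i.e. z = y - bse i
      have hz : y - bse i = z := by rw [hi]; abel
      have hadd : ∀ j, ¬ (y + bse j = z) := by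
        intro j hj
        exact add_bse_ne_sub y i j (hj.trans hz.symm)
      have e1 : (∑ j, if y + bse j = z then m else 0) = 0 :=
        Finset.sum_eq_zero fun j _ => if_neg (hadd j)
      have e2 : (∑ j, if y - bse j = z then m else 0) = m := by
        have : ∀ j : Fin d, (if y - bse j = z then m else 0) = if j = i then m else 0 := by
          intro j
          by_cases hji : j = i
          · subst hji; rw [if_pos hz, if_pos rfl]
          · rw [if_neg (fun hj => hji (sub_bse_inj.mp (hj.trans hz.symm))), if_neg hji]
        rw [Finset.sum_congr rfl fun j _ => this j]
        simp
      rw [e1, e2, zero_add]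
    · -- y = z - bse i, i.e. z = y + bse i
      have hz : y + bse i = z := by rw [hi]; abel
      have hsub : ∀ j, ¬ (y - bse j = z) := by
        intro j hj
        exact add_bse_ne_sub y j i (hz.trans hj.symm)
      have e2 : (∑ j, if y - bse j = z then m else 0) = 0 :=
        Finset.sum_eq_zero fun j _ => if_neg (hsub j)
      have e1 : (∑ j, if y + bse j = z then m else 0) = m := by
        have : ∀ j : Fin d, (if y + bse j = z then m else 0) = if j = i then m else 0 := by
          intro j
          by_cases hji : j = i
          · subst hji; rw [if_pos hz, if_pos rfl]
          · rw [if_neg (fun hj => hji (add_bse_inj.mp (hj.trans hz.symm))), if_neg hji]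
        rw [Finset.sum_congr rfl fun j _ => this j]
        simp
      rw [e1, e2, add_zero]
  · rw [if_neg h]
    have h1 : ∀ i, ¬ (y + bse i = z) := fun i hi => h (nbr_symm (hi ▸ nbr_add y i))
    have h2 : ∀ i, ¬ (y - bse i = z) := fun i hi => h (nbr_symm (hi ▸ nbr_sub y i))
    simp [h1, h2]

end Geo

section Evo

variable {d : ℕ}

/-- Sum of a function over the `2d` neighbours of a site. -/
noncomputable def Ssum (u : Site d → ℝ) (y : Site d) : ℝ :=
  ∑ i, (u (y + bse i) + u (y - bse i))

/-- The mass determined by an odometer `u`. -/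
noncomputable def Mfun (μ0 u : Site d → ℝ) (y : Site d) : ℝ :=
  μ0 y + (1 / (2 * (d : ℝ))) * Ssum u y - u y

lemma Ssum_mono {u v : Site d → ℝ} (h : ∀ w, u w ≤ v w) (y : Site d) :
    Ssum u y ≤ Ssum v y :=
  Finset.sum_le_sum fun i _ => add_le_add (h _) (h _)

open Classical in
lemma Ssum_update (u : Site d → ℝ) (z : Site d) (m : ℝ) (y : Site d) :
    Ssum (fun w => if w = z then u w + m else u w) y
      = Ssum u y + (if nbr z y then m else 0) := by
  classical
  have hu' : ∀ w, (if w = z then u w + m else u w) = u w + (if w = z then m else 0) := by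
    intro w; split_ifs <;> ring
  calc Ssum (fun w => if w = z then u w + m else u w) y
      = ∑ i, ((u (y + bse i) + u (y - bse i)) +
          ((if y + bse i = z then m else 0) + (if y - bse i = z then m else 0))) := by
        unfold Ssum
        exact Finset.sum_congr rfl fun i _ => by dsimp only; rw [hu', hu']; ring
    _ = Ssum u y + (if nbr z y then m else 0) := by
        rw [Finset.sum_add_distrib, sum_ite_rep]
        rfl

lemma topple_of_stable {κ : ℝ} {c : Config d} {x : Site d} (h : ¬ Unstable κ c x) :
    topple κ c x = c := by
  rw [topple, if_neg h]

open Classical in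
lemma topple_of_unstable {κ : ℝ} {c : Config d} {x : Site d} (h : Unstable κ c x) :
    topple κ c x =
      { V := c.V ∪ {y | nbr x y}
        μ := fun y => if y = x then 0 else
          if nbr x y then c.μ y + c.μ x / (2 * (d : ℝ)) else c.μ y
        u := fun y => if y = x then c.u y + c.μ y else c.u y } := by
  rw [topple, if_pos h]

lemma unstable_mass_pos {κ : ℝ} (hκ : 0 < κ) {c : Config d} {x : Site d}
    (h : Unstable κ c x) : 0 < c.μ x := by
  rcases h with ⟨_, h⟩ | ⟨_, h⟩
  · linarith
  · exact h

variable (κ : ℝ) (μ0 : Site d → ℝ) (T : ℕ → Site d)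

lemma evolve_succ (n : ℕ) :
    evolve κ μ0 T (n + 1) = topple κ (evolve κ μ0 T n) (T n) := rfl

lemma u_mono (hκ : 0 < κ) (x : Site d) :
    Monotone fun n => (evolve κ μ0 T n).u x := by
  apply monotone_nat_of_le_succ
  intro n
  by_cases h : Unstable κ (evolve κ μ0 T n) (T n)
  · rw [evolve_succ, topple_of_unstable h]
    dsimp only
    split_ifs with hx
    · subst hx
      have := unstable_mass_pos hκ h
      linarith
    · exact le_refl _
  · rw [evolve_succ, topple_of_stable h]

lemma u_nonneg (hκ : 0 < κ) (n : ℕ) (x : Site d) : 0 ≤ (evolve κ μ0 T n).u x := by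
  have h0 : (evolve κ μ0 T 0).u x = 0 := rfl
  have := u_mono κ μ0 T hκ x (Nat.zero_le n)
  simpa [h0] using this

/-- The fundamental mass identity: `μ_n = μ0 + Δ u_n`. -/
lemma mass_eq (n : ℕ) (y : Site d) :
    (evolve κ μ0 T n).μ y = Mfun μ0 (evolve κ μ0 T n).u y := by
  classical
  induction n generalizing y with
  | zero =>
    show μ0 y = Mfun μ0 (fun _ => 0) y
    simp [Mfun, Ssum]
  | succ n ih =>
    set c := evolve κ μ0 T n with hc
    by_cases h : Unstable κ c (T n)
    · set z := T n with hz
      set m := c.μ z with hm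
      have hufun : (fun y => if y = z then c.u y + c.μ y else c.u y)
          = (fun w => if w = z then c.u w + m else c.u w) := by
        funext w
        by_cases hw : w = z
        · subst hw; simp [hm]
        · simp [hw]
      rw [evolve_succ, topple_of_unstable h]
      dsimp only
      rw [hufun]
      by_cases hy : y = z
      · subst hy
        rw [if_pos rfl]
        unfold Mfun
        dsimp only
        rw [Ssum_update, if_pos rfl, if_neg (not_nbr_self z)]
        have hMz : m = Mfun μ0 c.u z := hm.trans (ih z)
        unfold Mfun at hMz
        linarith
      · rw [if_neg hy]
        unfold Mfun
        dsimp only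
        rw [Ssum_update, if_neg hy]
        have hIH := ih y
        unfold Mfun at hIH
        rw [← hm]
        by_cases hnb : nbr z y
        · rw [if_pos hnb, if_pos hnb, hIH]
          ring
        · rw [if_neg hnb, if_neg hnb, hIH]
          ring
    · rw [evolve_succ, topple_of_stable h]
      exact ih y

/-- Characterization of the visited set in terms of the odometer. -/
lemma V_char (hκ : 0 < κ) (n : ℕ) :
    (evolve κ μ0 T n).V =
      Function.support μ0 ∪ {y | ∃ z, nbr z y ∧ 0 < (evolve κ μ0 T n).u z} := by
  induction n with
  | zero =>
    show Function.support μ0 = _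
    have : {y : Site d | ∃ z, nbr z y ∧ 0 < (evolve κ μ0 T 0).u z} = ∅ := by
      ext y
      simp only [Set.mem_setOf_eq, Set.mem_empty_iff_false, iff_false, not_exists]
      rintro z ⟨_, hpos⟩
      exact absurd hpos (by norm_num [show (evolve κ μ0 T 0).u z = 0 from rfl])
    rw [this, Set.union_empty]
  | succ n ih =>
    set c := evolve κ μ0 T n with hc
    by_cases h : Unstable κ c (T n)
    · set z := T n with hz
      have hm : 0 < c.μ z := unstable_mass_pos hκ h
      rw [evolve_succ, topple_of_unstable h]
      dsimp only
      rw [ih, Set.union_assoc]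
      congr 1
      ext y
      simp only [Set.mem_setOf_eq, Set.mem_union]
      constructor
      · rintro (⟨w, hw1, hw2⟩ | hnb)
        · refine ⟨w, hw1, ?_⟩
          by_cases hwz : w = z
          · subst hwz
            have := u_nonneg κ μ0 T hκ n z
            split_ifs with hcond
            · linarith
            · simp at hcond
          · simpa [hwz] using hw2
        · refine ⟨z, hnb, ?_⟩
          have := u_nonneg κ μ0 T hκ n z
          split_ifs with hcond
          · linarith
          · simp at hcond
      · rintro ⟨w, hw1, hw2⟩
        by_cases hwz : w = z
        · subst hwz
          exact Or.inr hw1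
        · left
          exact ⟨w, hw1, by simpa [hwz] using hw2⟩
    · rw [evolve_succ, topple_of_stable h]
      exact ih

end Evo

section Lim

variable {d : ℕ}

/-- The limit visited set determined by the limit odometer. -/
def VL (μ0 uL : Site d → ℝ) : Set (Site d) :=
  Function.support μ0 ∪ {y | ∃ z, nbr z y ∧ 0 < uL z}

lemma mem_intr_iff (V : Set (Site d)) (x : Site d) :
    x ∈ intr V ↔ x ∈ V ∧ ∀ y, nbr x y → y ∈ V := by
  unfold intr bdry
  constructor
  · rintro ⟨hV, hnb⟩
    refine ⟨hV, fun y hy => ?_⟩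
    by_contra hout
    exact hnb ⟨hV, y, hy, hout⟩
  · rintro ⟨hV, hall⟩
    exact ⟨hV, fun h => h.2.elim (fun y hy => hy.2 (hall y hy.1))⟩

variable {κ : ℝ} {μ0 : Site d → ℝ} {T : ℕ → Site d} {uL : Site d → ℝ}
variable (hκ : 0 < κ)
variable (hconv : ∀ x, Filter.Tendsto (fun n => (evolve κ μ0 T n).u x)
  Filter.atTop (nhds (uL x)))

include hκ hconv

lemma u_le_lim (n : ℕ) (x : Site d) : (evolve κ μ0 T n).u x ≤ uL x :=
  (u_mono κ μ0 T hκ x).ge_of_tendsto (hconv x) n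

lemma uL_nonneg (x : Site d) : 0 ≤ uL x := by
  have h0 : (evolve κ μ0 T 0).u x = 0 := rfl
  have := u_le_lim hκ hconv 0 x
  linarith [h0 ▸ this]

lemma mass_tendsto (y : Site d) :
    Filter.Tendsto (fun n => (evolve κ μ0 T n).μ y) Filter.atTop
      (nhds (Mfun μ0 uL y)) := by
  have hS : Filter.Tendsto (fun n => Ssum (evolve κ μ0 T n).u y) Filter.atTop
      (nhds (Ssum uL y)) := by
    unfold Ssum
    exact tendsto_finset_sum _ fun i _ => (hconv _).add (hconv _)
  have h1 : Filter.Tendsto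
      (fun n => μ0 y + (1 / (2 * (d : ℝ))) * Ssum (evolve κ μ0 T n).u y
        - (evolve κ μ0 T n).u y) Filter.atTop (nhds (Mfun μ0 uL y)) :=
    (tendsto_const_nhds.add (hS.const_mul _)).sub (hconv y)
  exact h1.congr fun n => (mass_eq κ μ0 T n y).symm

omit hconv in
lemma V_subset_VL (T' : ℕ → Site d) (k : ℕ)
    (hle : ∀ z, (evolve κ μ0 T' k).u z ≤ uL z) :
    (evolve κ μ0 T' k).V ⊆ VL μ0 uL := by
  rw [V_char κ μ0 T' hκ k]
  rintro y (h | ⟨z, h1, h2⟩)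
  · exact Or.inl h
  · exact Or.inr ⟨z, h1, lt_of_lt_of_le h2 (hle z)⟩

lemma eventually_mem_V {x : Site d} (hx : x ∈ VL μ0 uL) :
    ∀ᶠ n in Filter.atTop, x ∈ (evolve κ μ0 T n).V := by
  rcases hx with h | ⟨z, h1, h2⟩
  · exact Filter.Eventually.of_forall fun n => by
      rw [V_char κ μ0 T hκ n]; exact Or.inl h
  · have := (hconv z).eventually (eventually_gt_nhds h2)
    exact this.mono fun n hn => by
      rw [V_char κ μ0 T hκ n]; exact Or.inr ⟨z, h1, hn⟩

variable (hT : Infinitive T)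
include hT

/-- In the limit of an infinitive sequence, boundary sites are stable. -/
lemma bdry_stable {x : Site d} (hx : x ∈ bdry (VL μ0 uL)) :
    Mfun μ0 uL x ≤ κ := by
  by_contra hgt
  push_neg at hgt
  obtain ⟨hxV, y, hy1, hy2⟩ := hx
  have hev1 : ∀ᶠ n in Filter.atTop, κ < (evolve κ μ0 T n).μ x :=
    (mass_tendsto hκ hconv x).eventually (eventually_gt_nhds hgt)
  have hev2 : ∀ᶠ n in Filter.atTop, x ∈ (evolve κ μ0 T n).V :=
    eventually_mem_V hκ hconv hxV
  have hev3 : ∀ᶠ n in Filter.atTop,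
      uL x < (evolve κ μ0 T n).u x + (evolve κ μ0 T n).μ x := by
    have hlt : uL x < uL x + Mfun μ0 uL x := by linarith
    exact ((hconv x).add (mass_tendsto hκ hconv x)).eventually (eventually_gt_nhds hlt)
  obtain ⟨N, hN⟩ := Filter.eventually_atTop.mp ((hev1.and hev2).and hev3)
  obtain ⟨k, hkmem, hkN⟩ := (hT x).exists_gt N
  obtain ⟨⟨hk1, hk2⟩, hk3⟩ := hN k hkN.le
  have hU : Unstable κ (evolve κ μ0 T k) x := by
    left
    refine ⟨⟨hk2, y, hy1, fun hyV => hy2 ?_⟩, hk1⟩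
    exact V_subset_VL hκ T k (fun z => u_le_lim hκ hconv k z) hyV
  have hxk : T k = x := hkmem
  have hsucc : (evolve κ μ0 T (k + 1)).u x
      = (evolve κ μ0 T k).u x + (evolve κ μ0 T k).μ x := by
    rw [evolve_succ, topple_of_unstable (hxk ▸ hU)]
    simp [hxk]
  have hle := u_le_lim hκ hconv (k + 1) x
  rw [hsucc] at hle
  linarith

/-- In the limit of an infinitive sequence, interior sites carry no mass. -/
lemma intr_stable {x : Site d} (hx : x ∈ intr (VL μ0 uL)) :
    Mfun μ0 uL x ≤ 0 := by
  by_contra hgt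
  push_neg at hgt
  rw [mem_intr_iff] at hx
  obtain ⟨hxV, hall⟩ := hx
  have hev1 : ∀ᶠ n in Filter.atTop, 0 < (evolve κ μ0 T n).μ x :=
    (mass_tendsto hκ hconv x).eventually (eventually_gt_nhds hgt)
  have hev2 : ∀ᶠ n in Filter.atTop, x ∈ intr (evolve κ μ0 T n).V := by
    have hnbrs : ∀ᶠ n in Filter.atTop, ∀ i : Fin d,
        (x + bse i) ∈ (evolve κ μ0 T n).V ∧ (x - bse i) ∈ (evolve κ μ0 T n).V := by
      rw [Filter.eventually_all]
      intro i
      exact (eventually_mem_V hκ hconv (hall _ (nbr_add x i))).and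
        (eventually_mem_V hκ hconv (hall _ (nbr_sub x i)))
    filter_upwards [hnbrs, eventually_mem_V hκ hconv hxV] with n hn hxn
    rw [mem_intr_iff]
    refine ⟨hxn, fun y hy => ?_⟩
    obtain ⟨i, rfl | rfl⟩ := (nbr_iff x y).mp hy
    · exact (hn i).1
    · exact (hn i).2
  have hev3 : ∀ᶠ n in Filter.atTop,
      uL x < (evolve κ μ0 T n).u x + (evolve κ μ0 T n).μ x := by
    have hlt : uL x < uL x + Mfun μ0 uL x := by linarith
    exact ((hconv x).add (mass_tendsto hκ hconv x)).eventually (eventually_gt_nhds hlt)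
  obtain ⟨N, hN⟩ := Filter.eventually_atTop.mp ((hev1.and hev2).and hev3)
  obtain ⟨k, hkmem, hkN⟩ := (hT x).exists_gt N
  obtain ⟨⟨hk1, hk2⟩, hk3⟩ := hN k hkN.le
  have hU : Unstable κ (evolve κ μ0 T k) x := Or.inr ⟨hk2, hk1⟩
  have hxk : T k = x := hkmem
  have hsucc : (evolve κ μ0 T (k + 1)).u x
      = (evolve κ μ0 T k).u x + (evolve κ μ0 T k).μ x := by
    rw [evolve_succ, topple_of_unstable (hxk ▸ hU)]
    simp [hxk]
  have hle := u_le_lim hκ hconv (k + 1) x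
  rw [hsucc] at hle
  linarith

/-- The key comparison: the odometer of any toppling sequence stays below the limit
odometer of an infinitive sequence. -/
lemma key_le (T' : ℕ → Site d) : ∀ k x, (evolve κ μ0 T' k).u x ≤ uL x := by
  intro k
  induction k with
  | zero => exact fun x => uL_nonneg hκ hconv x
  | succ k ih =>
    intro x
    by_cases hU : Unstable κ (evolve κ μ0 T' k) (T' k)
    · rw [evolve_succ, topple_of_unstable hU]
      dsimp only
      split_ifs with hx
      · -- x = T' k is the toppled site
        subst hx
        set x := T' k with hxdef
        set c := evolve κ μ0 T' k with hc
        have hmass : c.μ x = Mfun μ0 c.u x := mass_eq κ μ0 T' k x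
        have hS : Ssum c.u x ≤ Ssum uL x := Ssum_mono (fun w => ih w) x
        have hSc : (1 / (2 * (d : ℝ))) * Ssum c.u x
            ≤ (1 / (2 * (d : ℝ))) * Ssum uL x :=
          mul_le_mul_of_nonneg_left hS (by positivity)
        have hMr : Mfun μ0 uL x = μ0 x + (1 / (2 * (d : ℝ))) * Ssum uL x - uL x := rfl
        have hMl : Mfun μ0 c.u x = μ0 x + (1 / (2 * (d : ℝ))) * Ssum c.u x - c.u x := rfl
        have hVsub : c.V ⊆ VL μ0 uL := V_subset_VL hκ T' k ih
        have hxc : x ∈ c.V := by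
          rcases hU with ⟨hb, _⟩ | ⟨hi, _⟩
          · exact hb.1
          · exact hi.1
        have hxVL : x ∈ VL μ0 uL := hVsub hxc
        by_cases hint : x ∈ intr (VL μ0 uL)
        · have := intr_stable hκ hconv hT hint
          linarith
        · have hbd : x ∈ bdry (VL μ0 uL) := by
            by_contra hnb
            exact hint ⟨hxVL, hnb⟩
          have hMκ := bdry_stable hκ hconv hT hbd
          have huL0 : uL x ≤ 0 := by
            by_contra hpos
            push_neg at hpos
            obtain ⟨y, hy1, hy2⟩ := hbd.2
            exact hy2 (Or.inr ⟨x, hy1, hpos⟩)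
          have hu0 : 0 ≤ c.u x := u_nonneg κ μ0 T' hκ k x
          rcases hU with ⟨_, hκμ⟩ | ⟨hi, _⟩
          · -- boundary toppling: contradiction, the mass cannot exceed κ here
            exact absurd hκμ (by linarith)
          · -- interior toppling: contradicts x being a boundary site of the limit set
            exfalso
            obtain ⟨y, hy1, hy2⟩ := hbd.2
            have : y ∈ c.V := ((mem_intr_iff _ _).mp hi).2 y hy1
            exact hy2 (hVsub this)
      · exact ih x
    · rw [evolve_succ, topple_of_stable hU]
      exact ih x

end Lim

/-- Abelian property. For every mass distribution `μ₀` on `ℤ^d` with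
finite support and every capacity `κ > 0`, any two infinitive toppling sequences
`T₁, T₂` for `BS(μ₀, κ)` have the same odometer: if `u₁` and `u₂` are the pointwise
limits of the odometer functions along `T₁` and `T₂`, then `u₁ = u₂` on `ℤ^d`. -/
theorem stmt1 {d : ℕ} (hd : 2 ≤ d) (μ0 : Site d → ℝ) (hμ0 : IsMassDist μ0)
    (κ : ℝ) (hκ : 0 < κ) (T1 T2 : ℕ → Site d)
    (hT1 : Infinitive T1) (hT2 : Infinitive T2)
    (u1 u2 : Site d → ℝ)
    (hu1 : ∀ x : Site d,
      Tendsto (fun k => (evolve κ μ0 T1 k).u x) atTop (nhds (u1 x)))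
    (hu2 : ∀ x : Site d,
      Tendsto (fun k => (evolve κ μ0 T2 k).u x) atTop (nhds (u2 x))) :
    ∀ x : Site d, u1 x = u2 x := by
  intro x
  have h21 : ∀ k y, (evolve κ μ0 T2 k).u y ≤ u1 y := key_le hκ hu1 hT1 T2
  have h12 : ∀ k y, (evolve κ μ0 T1 k).u y ≤ u2 y := key_le hκ hu2 hT2 T1
  have h1 : u1 x ≤ u2 x :=
    le_of_tendsto (hu1 x) (Filter.Eventually.of_forall fun k => h12 k x)
  have h2 : u2 x ≤ u1 x :=
    le_of_tendsto (hu2 x) (Filter.Eventually.of_forall fun k => h21 k x)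
  linarith

end Sandpile
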